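/- Let s: ℝⁿ → ℝ be a function satisfying the lower prox-regularity bound s(x) − s(x⁺) ≥ ⟨g, x − x⁺⟩ − (M/2)‖x − x⁺‖² for some g ∈ ∂s(x⁺) and M > 0, and let Φ ∈ ℝ^{r×n} have δ₊(ΦᵀΦ) > 0. Suppose x⁺ minimizes x ↦ s(x) + ⟨η, Φx⟩ + (γ/2)‖Φx − c‖², so that 0 ∈ ∂s(x⁺) + Φᵀη + γΦᵀ(Φx⁺ − c). Then for all x: s(x) + ⟨η, Φx⟩ + (γ/2)‖Φx − c‖² − [s(x⁺) + ⟨η, Φx⁺⟩ + (γ/2)‖Φx⁺ − c‖²] ≥ ((γδ₊(ΦᵀΦ) − M)/2)‖x − x⁺‖². In particular the decrease is strictly positive for x ≠ x⁺ whenever γ > M/δ₊(ΦᵀΦ). -/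
import Mathlib

open Matrix

theorem stmt12 {n r : ℕ} (s : (Fin n → ℝ) → ℝ)
    (Φ : Matrix (Fin r) (Fin n) ℝ) (c η : Fin r → ℝ)
    (xplus g : Fin n → ℝ) (M γ δΦ : ℝ) (hM : 0 < M) (hγ : 0 < γ) (hδΦ : 0 < δΦ)
    (hδ : ∀ v : Fin n → ℝ, δΦ * (v ⬝ᵥ v) ≤ v ⬝ᵥ ((Φᵀ * Φ) *ᵥ v))
    (hprox : ∀ x, s x - s xplus ≥ g ⬝ᵥ (x - xplus) - M/2 * ((x - xplus) ⬝ᵥ (x - xplus)))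
    (hstat : g + Φᵀ *ᵥ η + γ • (Φᵀ *ᵥ (Φ *ᵥ xplus - c)) = 0)
    (L : (Fin n → ℝ) → ℝ)
    (hL : ∀ x, L x = s x + η ⬝ᵥ (Φ *ᵥ x) + γ/2 * ((Φ *ᵥ x - c) ⬝ᵥ (Φ *ᵥ x - c))) :
    (∀ x, L x - L xplus ≥ (γ * δΦ - M)/2 * ((x - xplus) ⬝ᵥ (x - xplus))) ∧
    (M / δΦ < γ → ∀ x, x ≠ xplus → 0 < L x - L xplus) := by
  have main : ∀ x, L x - L xplus ≥ (γ * δΦ - M)/2 * ((x - xplus) ⬝ᵥ (x - xplus)) := by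
    intro x
    set d := x - xplus with hd
    have hx : x = xplus + d := by simp [hd]
    have hΦx : Φ *ᵥ x - c = (Φ *ᵥ xplus - c) + Φ *ᵥ d := by
      rw [hx, mulVec_add]; abel
    -- g ⬝ᵥ d
    have hg : g = -(Φᵀ *ᵥ η) - γ • (Φᵀ *ᵥ (Φ *ᵥ xplus - c)) := by
      have := hstat
      linear_combination (norm := module) hstat
    have hgd : g ⬝ᵥ d = -(η ⬝ᵥ (Φ *ᵥ d)) - γ * ((Φ *ᵥ xplus - c) ⬝ᵥ (Φ *ᵥ d)) := by
      rw [hg]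
      simp [sub_dotProduct, neg_dotProduct, smul_dotProduct]
      rw [show (Φᵀ *ᵥ η) ⬝ᵥ d = η ⬝ᵥ (Φ *ᵥ d) by
        rw [mulVec_transpose, ← dotProduct_mulVec],
        show (Φᵀ *ᵥ (Φ *ᵥ xplus - c)) ⬝ᵥ d = (Φ *ᵥ xplus - c) ⬝ᵥ (Φ *ᵥ d) by
        rw [mulVec_transpose, ← dotProduct_mulVec]]
      rw [sub_dotProduct]
    have hquad : d ⬝ᵥ ((Φᵀ * Φ) *ᵥ d) = (Φ *ᵥ d) ⬝ᵥ (Φ *ᵥ d) := by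
      rw [← mulVec_mulVec, dotProduct_mulVec, vecMul_transpose]
    have hδd := hδ d
    rw [hquad] at hδd
    have hp := hprox x
    have hηx : η ⬝ᵥ (Φ *ᵥ x) = η ⬝ᵥ (Φ *ᵥ xplus) + η ⬝ᵥ (Φ *ᵥ d) := by
      rw [hx, mulVec_add, dotProduct_add]
    have hcross : (Φ *ᵥ x - c) ⬝ᵥ (Φ *ᵥ x - c) =
        (Φ *ᵥ xplus - c) ⬝ᵥ (Φ *ᵥ xplus - c) + 2 * ((Φ *ᵥ xplus - c) ⬝ᵥ (Φ *ᵥ d))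
          + (Φ *ᵥ d) ⬝ᵥ (Φ *ᵥ d) := by
      rw [hΦx]
      simp [dotProduct_add, add_dotProduct]
      rw [dotProduct_comm (Φ *ᵥ d) (Φ *ᵥ xplus), dotProduct_comm (Φ *ᵥ d) c]
      ring
    rw [hL x, hL xplus]
    rw [hgd] at hp
    nlinarith [hp, hδd, hγ.le]
  refine ⟨main, fun hγδ x hx => ?_⟩
  have hdd : 0 < (x - xplus) ⬝ᵥ (x - xplus) := by
    have hne : x - xplus ≠ 0 := sub_ne_zero.mpr hx
    have := dotProduct_self_eq_zero (v := x - xplus)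
    have h0 : 0 ≤ (x - xplus) ⬝ᵥ (x - xplus) := Finset.sum_nonneg fun i _ => mul_self_nonneg _
    rcases h0.lt_or_eq with h | h
    · exact h
    · exact absurd (this.mp h.symm) hne
  have hcoef : 0 < (γ * δΦ - M)/2 := by
    have : M < γ * δΦ := by
      rw [div_lt_iff₀ hδΦ] at hγδ; linarith
    linarith
  calc 0 < (γ * δΦ - M)/2 * ((x - xplus) ⬝ᵥ (x - xplus)) := mul_pos hcoef hdd
    _ ≤ L x - L xplus := main x
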